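/- Let K be a finite connected graph with first Betti number k and let (γ_1,…,γ_k) be an integral basis of Z_1(K,ℤ). Then Σ_{T spanning tree of K} (γ(T,e_1) ∧ … ∧ γ(T,e_k)) ⊗ (e_1 ∧ … ∧ e_k) = (γ_1 ∧ … ∧ γ_k)^{⊗2} in (⋀^k Z_1(K,ℤ))⊗(⋀^k C_1(K,ℤ)), where for each spanning tree T, e_1,…,e_k are the positively oriented edges of K not in T (in a fixed order) and γ(T,e_i) are the corresponding fundamental cycles. -/

import Mathlib

/-! Framework: finite connected graph `K = (V, E, head, tail)` with linearly ordered
edge set; `C₁(K,ℤ)` is modeled as `E → ℤ`. -/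

section Graph

variable {V E : Type*} [Fintype V] [Fintype E] [DecidableEq V] [DecidableEq E]
  [LinearOrder E]

/-- The boundary operator `∂`; its kernel is the cycle group `Z₁(K,ℤ)`. -/
def bd (head tail : E → V) : (E → ℤ) →ₗ[ℤ] (V → ℤ) where
  toFun c := fun v => ∑ e, c e *
    ((if head e = v then 1 else 0) - (if tail e = v then 1 else 0))
  map_add' c d := by
    funext v
    simp [add_mul, Finset.sum_add_distrib]
  map_smul' r c := by
    funext v
    simp [Finset.mul_sum, mul_assoc]

/-- Two vertices are connected through the edges of `T`. -/
def Conn (head tail : E → V) (T : Finset E) (v w : V) : Prop :=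
  Relation.ReflTransGen
    (fun a b => ∃ e ∈ T, (head e = a ∧ tail e = b) ∨ (head e = b ∧ tail e = a)) v w

/-- `T` is a spanning tree. -/
def IsSpanningTree (head tail : E → V) (T : Finset E) : Prop :=
  T.card + 1 = Fintype.card V ∧ ∀ v w : V, Conn head tail T v w

/-- Wedge of a list of chains, in the exterior algebra of `C₁(K,ℤ)`. -/
noncomputable def listWedge (l : List (E → ℤ)) : ExteriorAlgebra ℤ (E → ℤ) :=
  (l.map (fun c => ExteriorAlgebra.ι ℤ c)).prod

/-- The wedge `e_S` of the canonical edge basis vectors of `S`, in the fixed order. -/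
noncomputable def eWedge (S : Finset E) : ExteriorAlgebra ℤ (E → ℤ) :=
  listWedge ((S.sort (· ≤ ·)).map (fun e => Pi.single e (1 : ℤ)))

/-- The wedge `γ₁ ∧ … ∧ γₙ` of a finite family of chains. -/
noncomputable def chainWedge {n : ℕ} (γ : Fin n → (E → ℤ)) :
    ExteriorAlgebra ℤ (E → ℤ) :=
  listWedge ((List.finRange n).map γ)

end Graph

set_option linter.unusedSectionVars false

open Classical

section ConnLemmas

variable {V E : Type*} [Fintype V] [Fintype E] [DecidableEq V] [DecidableEq E]
  [LinearOrder E] (head tail : E → V)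

lemma conn_refl (T : Finset E) (v : V) : Conn head tail T v v := Relation.ReflTransGen.refl

lemma conn_symm {T : Finset E} {v w : V} (h : Conn head tail T v w) : Conn head tail T w v := by
  induction h with
  | refl => exact Relation.ReflTransGen.refl
  | tail _ hs ih =>
    obtain ⟨e, he, h | h⟩ := hs
    exacts [Relation.ReflTransGen.head ⟨e, he, Or.inr h⟩ ih,
      Relation.ReflTransGen.head ⟨e, he, Or.inl h⟩ ih]

lemma conn_trans {T : Finset E} {u v w : V} (h : Conn head tail T u v)
    (h' : Conn head tail T v w) : Conn head tail T u w := h.trans h'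

lemma conn_mono {T T' : Finset E} (hTT : T ⊆ T') {v w : V} (h : Conn head tail T v w) :
    Conn head tail T' v w := by
  induction h with
  | refl => exact Relation.ReflTransGen.refl
  | tail _ hs ih =>
    obtain ⟨e, he, h⟩ := hs
    exact ih.tail ⟨e, hTT he, h⟩

lemma conn_step {T : Finset E} {e : E} (he : e ∈ T) :
    Conn head tail T (head e) (tail e) :=
  Relation.ReflTransGen.single ⟨e, he, Or.inl ⟨rfl, rfl⟩⟩

/-- The connectivity setoid. -/
def connSetoid (T : Finset E) : Setoid V :=
  ⟨Conn head tail T, ⟨conn_refl head tail T, conn_symm head tail, conn_trans head tail⟩⟩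

lemma conn_empty {v w : V} (h : Conn head tail (∅ : Finset E) v w) : v = w := by
  induction h with
  | refl => rfl
  | tail _ h ih => rcases h with ⟨e, he, _⟩; simp at he

/-- Splitting lemma for connectivity through `insert e T`. -/
lemma conn_insert {T : Finset E} {e : E} {v w : V}
    (h : Conn head tail (insert e T) v w) :
    Conn head tail T v w ∨
      ((Conn head tail T v (head e) ∨ Conn head tail T v (tail e)) ∧
       (Conn head tail T w (head e) ∨ Conn head tail T w (tail e))) := by
  induction h with
  | refl => exact Or.inl (conn_refl head tail T v)
  | tail _ hstep ih =>
    rename_i b c _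
    rcases hstep with ⟨f, hf, hor⟩
    rcases Finset.mem_insert.mp hf with rfl | hfT
    · -- the step uses edge e
      rcases ih with hvb | ⟨hv, hb⟩
      · rcases hor with ⟨h1, h2⟩ | ⟨h1, h2⟩
        · refine Or.inr ⟨Or.inl (by rw [h1]; exact hvb), Or.inr (by rw [h2]; exact conn_refl head tail T c)⟩
        · refine Or.inr ⟨Or.inr (by rw [h2]; exact hvb), Or.inl (by rw [h1]; exact conn_refl head tail T c)⟩
      · rcases hor with ⟨h1, h2⟩ | ⟨h1, h2⟩
        · exact Or.inr ⟨hv, Or.inr (by rw [h2]; exact conn_refl head tail T c)⟩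
        · exact Or.inr ⟨hv, Or.inl (by rw [h1]; exact conn_refl head tail T c)⟩
    · -- the step uses an edge of T
      have hbc : Conn head tail T b c := by
        rcases hor with ⟨h1, h2⟩ | ⟨h1, h2⟩
        · exact h1 ▸ h2 ▸ conn_step head tail hfT
        · exact conn_symm head tail (h1 ▸ h2 ▸ conn_step head tail hfT)
      rcases ih with hvb | ⟨hv, hb⟩
      · exact Or.inl (conn_trans head tail hvb hbc)
      · exact Or.inr ⟨hv, hb.imp (conn_trans head tail (conn_symm head tail hbc))
          (conn_trans head tail (conn_symm head tail hbc))⟩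

/-- Number of connected components of the subgraph with edge set `T`. -/
noncomputable def nComp (T : Finset E) : ℕ := Nat.card (Quotient (connSetoid head tail T))

lemma nComp_empty : nComp head tail (∅ : Finset E) = Fintype.card V := by
  rw [nComp, ← Nat.card_eq_fintype_card]
  refine (Nat.card_eq_of_bijective (Quotient.mk (connSetoid head tail ∅)) ⟨?_, ?_⟩).symm
  · intro a b h
    exact conn_empty head tail (Quotient.eq''.mp h)
  · exact Quotient.mk''_surjective

lemma nComp_le_insert (T : Finset E) (e : E) :
    nComp head tail T ≤ nComp head tail (insert e T) + 1 := by
  classical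
  set sT := connSetoid head tail T
  set sI := connSetoid head tail (insert e T)
  let φ : Quotient sT → Quotient sI :=
    Quotient.map id (fun a b h => conn_mono head tail (Finset.subset_insert e T) h)
  let f : Quotient sT → Option (Quotient sI) := fun x =>
    if x = Quotient.mk sT (head e) then none else some (φ x)
  have hinj : Function.Injective f := by
    intro x y h
    induction x using Quotient.inductionOn with | _ a =>
    induction y using Quotient.inductionOn with | _ b =>
    simp only [f] at h
    by_cases hx : Quotient.mk sT a = Quotient.mk sT (head e) <;>
      by_cases hy : Quotient.mk sT b = Quotient.mk sT (head e)
    · rw [hx, hy]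
    · rw [if_pos hx, if_neg hy] at h; exact absurd h (by simp)
    · rw [if_neg hx, if_pos hy] at h; exact absurd h (by simp)
    · rw [if_neg hx, if_neg hy] at h
      have hab : Conn head tail (insert e T) a b := by
        have := Option.some_injective _ h
        exact Quotient.exact (s := sI) (a := a) (b := b) this
      rcases conn_insert head tail hab with hT | ⟨ha, hb⟩
      · exact Quotient.sound hT
      · have ha' : Conn head tail T a (tail e) := by
          rcases ha with h' | h'
          · exact absurd (Quotient.sound h') hx
          · exact h'
        have hb' : Conn head tail T b (tail e) := by
          rcases hb with h' | h'
          · exact absurd (Quotient.sound h') hy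
          · exact h'
        exact Quotient.sound (conn_trans head tail ha' (conn_symm head tail hb'))
  calc nComp head tail T ≤ Nat.card (Option (Quotient sI)) :=
        Nat.card_le_card_of_injective f hinj
    _ = nComp head tail (insert e T) + 1 := Finite.card_option

lemma card_V_le_nComp_add_card (T : Finset E) :
    Fintype.card V ≤ nComp head tail T + T.card := by
  classical
  induction T using Finset.induction_on with
  | empty => simp [nComp_empty head tail]
  | insert e T hx ih =>
    calc Fintype.card V ≤ nComp head tail T + T.card := ih
      _ ≤ (nComp head tail (insert e T) + 1) + T.card :=
          Nat.add_le_add_right (nComp_le_insert head tail T e) _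
      _ = nComp head tail (insert e T) + (insert e T).card := by
          rw [Finset.card_insert_of_notMem hx]; ring

lemma nComp_eq_one (T : Finset E) [Nonempty V] (h : ∀ v w : V, Conn head tail T v w) :
    nComp head tail T = 1 := by
  rw [nComp, Nat.card_eq_one_iff_unique]
  constructor
  · constructor
    intro x y
    induction x using Quotient.inductionOn with | _ a =>
    induction y using Quotient.inductionOn with | _ b =>
    exact Quotient.sound (h a b)
  · exact ⟨Quotient.mk _ (Classical.arbitrary V)⟩

lemma card_V_le_conn (T : Finset E) [Nonempty V] (h : ∀ v w : V, Conn head tail T v w) :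
    Fintype.card V ≤ 1 + T.card := by
  have := card_V_le_nComp_add_card head tail T
  rwa [nComp_eq_one head tail T h] at this

/-- Summing a cycle against the indicator of a cut gives zero. -/
lemma cycle_cut (C : Finset V) {z : E → ℤ} (hz : bd head tail z = 0) :
    ∑ e, z e * ((if head e ∈ C then (1:ℤ) else 0) - (if tail e ∈ C then 1 else 0)) = 0 := by
  have h0 : ∑ v ∈ C, bd head tail z v = 0 :=
    Finset.sum_eq_zero fun v _ => congrFun hz v
  calc ∑ e, z e * ((if head e ∈ C then (1:ℤ) else 0) - (if tail e ∈ C then 1 else 0))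
      = ∑ e, ∑ v ∈ C, z e *
          ((if head e = v then (1:ℤ) else 0) - (if tail e = v then 1 else 0)) := by
        refine Finset.sum_congr rfl fun e _ => ?_
        rw [← Finset.mul_sum, Finset.sum_sub_distrib]
        simp [Finset.sum_ite_eq' C]
    _ = ∑ v ∈ C, ∑ e, z e *
          ((if head e = v then (1:ℤ) else 0) - (if tail e = v then 1 else 0)) :=
        Finset.sum_comm
    _ = 0 := h0

/-- If two vertices on opposite sides of a set `C` are connected through `T`,
some edge of `T` crosses `C`. -/
lemma exists_crossing {T : Finset E} {C : Finset V} {v w : V}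
    (h : Conn head tail T v w) (hv : v ∈ C) (hw : w ∉ C) :
    ∃ e ∈ T, ¬ ((head e ∈ C) ↔ (tail e ∈ C)) := by
  revert hw
  induction h with
  | refl => exact fun hw => absurd hv hw
  | tail hvb hstep ih =>
    rename_i b c
    intro hw
    rcases hstep with ⟨f, hf, hor⟩
    by_cases hb : b ∈ C
    · refine ⟨f, hf, ?_⟩
      rcases hor with ⟨h1, h2⟩ | ⟨h1, h2⟩
      · rw [h1, h2]; intro hiff; exact hw (hiff.mp hb)
      · rw [h1, h2]; intro hiff; exact hw (hiff.mpr hb)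
    · exact ih hb

/-- A cycle supported in a spanning tree is zero. -/
lemma tree_cycle_zero (T : Finset E) (hT : IsSpanningTree head tail T)
    {z : E → ℤ} (hz : bd head tail z = 0) (hsupp : ∀ e ∉ T, z e = 0) : z = 0 := by
  funext e₀
  show z e₀ = 0
  by_cases he₀ : e₀ ∈ T
  swap
  · exact hsupp e₀ he₀
  have hV : Nonempty V := ⟨head e₀⟩
  set T' := T.erase e₀ with hT'
  by_cases hc : Conn head tail T' (head e₀) (tail e₀)
  · exfalso
    have hconn' : ∀ v w, Conn head tail T' v w := by
      intro v w
      induction hT.2 v w with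
      | refl => exact conn_refl head tail T' v
      | tail hvb hstep ih =>
        rename_i b c _
        rcases hstep with ⟨f, hf, hor⟩
        by_cases hfe : f = e₀
        · subst hfe
          rcases hor with ⟨h1, h2⟩ | ⟨h1, h2⟩
          · exact conn_trans head tail ih (by rw [← h1, ← h2]; exact hc)
          · exact conn_trans head tail ih
              (conn_symm head tail (by rw [← h1, ← h2]; exact hc))
        · exact conn_trans head tail ih
            (Relation.ReflTransGen.single ⟨f, Finset.mem_erase.mpr ⟨hfe, hf⟩, hor⟩)
    have h1 := card_V_le_conn head tail T' hconn'
    have h2 : T'.card = T.card - 1 := Finset.card_erase_of_mem he₀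
    have h3 : 0 < T.card := Finset.card_pos.mpr ⟨e₀, he₀⟩
    have h4 := hT.1
    omega
  · set C : Finset V := Finset.univ.filter (fun u => Conn head tail T' (head e₀) u) with hC
    have hmemC : ∀ u, u ∈ C ↔ Conn head tail T' (head e₀) u := by
      intro u; simp [hC]
    have hsum := cycle_cut head tail C hz
    have hterm : ∀ e ∈ Finset.univ, e ≠ e₀ →
        z e * ((if head e ∈ C then (1:ℤ) else 0) - (if tail e ∈ C then 1 else 0)) = 0 := by
      intro e _ hne
      by_cases heT : e ∈ T
      · have heT' : e ∈ T' := Finset.mem_erase.mpr ⟨hne, heT⟩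
        have hiff : head e ∈ C ↔ tail e ∈ C := by
          rw [hmemC, hmemC]
          constructor
          · intro h; exact conn_trans head tail h (conn_step head tail heT')
          · intro h; exact conn_trans head tail h (conn_symm head tail (conn_step head tail heT'))
        by_cases hh : head e ∈ C
        · rw [if_pos hh, if_pos (hiff.mp hh)]; ring
        · rw [if_neg hh, if_neg (fun h => hh (hiff.mpr h))]; ring
      · rw [hsupp e heT]; ring
    rw [Finset.sum_eq_single_of_mem e₀ (Finset.mem_univ e₀) hterm] at hsum
    have hhe : head e₀ ∈ C := (hmemC _).mpr (conn_refl head tail T' (head e₀))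
    have hte : tail e₀ ∉ C := fun h => hc ((hmemC _).mp h)
    rw [if_pos hhe, if_neg hte] at hsum
    simpa using hsum

section Alt

variable {M N : Type*} [AddCommGroup M] [AddCommGroup N]

omit [Fintype V] [Fintype E] [DecidableEq V] [DecidableEq E] [LinearOrder E] in
lemma perm_sum_smul {k : ℕ} (A : Matrix (Fin k) (Fin k) ℤ)
    (f : M [⋀^Fin k]→ₗ[ℤ] N) (w : Fin k → M) :
    ∑ σ : Equiv.Perm (Fin k), (∏ i, A i (σ i)) • f (w ∘ σ) = A.det • f w := by
  have hperm : ∀ σ : Equiv.Perm (Fin k),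
      f (w ∘ σ) = ((Equiv.Perm.sign σ : ℤ)) • f w := by
    intro σ
    rw [AlternatingMap.map_perm]
    rfl
  calc ∑ σ : Equiv.Perm (Fin k), (∏ i, A i (σ i)) • f (w ∘ σ)
      = ∑ σ : Equiv.Perm (Fin k),
          ((∏ i, A i (σ i)) * (Equiv.Perm.sign σ : ℤ)) • f w := by
        refine Finset.sum_congr rfl fun σ _ => ?_
        rw [hperm σ, smul_smul]
    _ = (∑ σ : Equiv.Perm (Fin k),
          (∏ i, A i (σ i)) * (Equiv.Perm.sign σ : ℤ)) • f w := by
        rw [Finset.sum_smul]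
    _ = A.det • f w := by
        congr 1
        rw [← Matrix.det_transpose, Matrix.det_apply']
        refine Finset.sum_congr rfl fun σ _ => ?_
        rw [mul_comm]
        simp [Matrix.transpose_apply]

omit [Fintype V] [Fintype E] [DecidableEq V] [DecidableEq E] [LinearOrder E] in
lemma alt_map_sum_smul {k : ℕ} (f : M [⋀^Fin k]→ₗ[ℤ] N)
    (A : Matrix (Fin k) (Fin k) ℤ) (w : Fin k → M) :
    f (fun i => ∑ j, A i j • w j) = A.det • f w := by
  classical
  have h0 : f (fun i => ∑ j, A i j • w j)
      = ∑ r : Fin k → Fin k, f (fun i => A i (r i) • w (r i)) :=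
    f.toMultilinearMap.map_sum (g := fun i j => A i j • w j)
  have h1 : ∀ r : Fin k → Fin k,
      f (fun i => A i (r i) • w (r i)) = (∏ i, A i (r i)) • f (w ∘ r) := by
    intro r
    exact f.toMultilinearMap.map_smul_univ (fun i => A i (r i)) (fun i => w (r i))
  rw [h0]
  simp_rw [h1]
  rw [← Finset.sum_filter_add_sum_filter_not Finset.univ Function.Bijective]
  have h2 : ∑ r ∈ Finset.univ.filter (¬ Function.Bijective ·),
      (∏ i, A i (r i)) • f (w ∘ r) = 0 := by
    refine Finset.sum_eq_zero fun r hr => ?_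
    have : ¬ Function.Injective r := by
      intro hinj
      exact (Finset.mem_filter.mp hr).2 (Finite.injective_iff_bijective.mp hinj)
    rw [Function.not_injective_iff] at this
    obtain ⟨i, j, hij, hne⟩ := this
    rw [AlternatingMap.map_eq_zero_of_eq f _ (show (w ∘ r) i = (w ∘ r) j by
      simp [Function.comp, hij]) hne, smul_zero]
  rw [h2, add_zero]
  rw [← perm_sum_smul A f w]
  exact Finset.sum_bij (fun p h => Equiv.ofBijective p (Finset.mem_filter.1 h).2)
    (fun _ _ => Finset.mem_univ _) (fun _ _ _ _ h => by injection h)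
    (fun b _ => ⟨b, Finset.mem_filter.2 ⟨Finset.mem_univ _, b.bijective⟩,
      Equiv.coe_fn_injective rfl⟩) (fun _ _ => rfl)

end Alt

omit [Fintype V] [DecidableEq V] [Fintype E] [DecidableEq E] [LinearOrder E] in
lemma listWedge_ofFn {k : ℕ} (w : Fin k → (E → ℤ)) :
    listWedge (List.ofFn w) = ExteriorAlgebra.ιMulti ℤ k w := by
  rw [ExteriorAlgebra.ιMulti_apply, listWedge, List.map_ofFn]
  rfl

omit [Fintype V] [DecidableEq V] [Fintype E] [DecidableEq E] [LinearOrder E] in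
lemma chainWedge_eq {k : ℕ} (γ : Fin k → (E → ℤ)) :
    chainWedge γ = ExteriorAlgebra.ιMulti ℤ k γ := by
  rw [chainWedge, ← List.ofFn_eq_map, listWedge_ofFn]

omit [Fintype V] [DecidableEq V] [Fintype E] [DecidableEq E] in
lemma sort_eq_ofFn (S : Finset E) {k : ℕ} (hS : S.card = k) :
    S.sort (· ≤ ·) = List.ofFn (fun j => S.orderEmbOfFin hS j) := by
  apply List.ext_getElem
  · simp [hS]
  · intro i h1 h2
    simp [Finset.orderEmbOfFin_apply]

omit [Fintype V] [DecidableEq V] [Fintype E] [DecidableEq E] in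
lemma listWedge_sort_map {k : ℕ} (S : Finset E) (hS : S.card = k) (F : E → (E → ℤ)) :
    listWedge ((S.sort (· ≤ ·)).map F)
      = ExteriorAlgebra.ιMulti ℤ k (fun j => F (S.orderEmbOfFin hS j)) := by
  rw [sort_eq_ofFn S hS, List.map_ofFn, listWedge_ofFn]
  rfl

omit [Fintype V] [DecidableEq V] [Fintype E] in
lemma eWedge_eq {k : ℕ} (S : Finset E) (hS : S.card = k) :
    eWedge S = ExteriorAlgebra.ιMulti ℤ k
      (fun j => Pi.single (S.orderEmbOfFin hS j) (1 : ℤ)) :=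
  listWedge_sort_map S hS _

/-- The determinant of the matrix of a family of chains restricted to the columns `S`. -/
noncomputable def detOn {k : ℕ} (γ : Fin k → (E → ℤ)) (S : Finset E) : ℤ :=
  if h : S.card = k then (Matrix.of fun i j => γ i (S.orderEmbOfFin h j)).det else 0

lemma iMulti_expand {k : ℕ} (γ : Fin k → (E → ℤ)) :
    ExteriorAlgebra.ιMulti ℤ k γ = ∑ S : Finset E, detOn γ S • eWedge S := by
  classical
  set u : E → (E → ℤ) := fun e => Pi.single e (1 : ℤ) with hu
  set f : (E → ℤ) [⋀^Fin k]→ₗ[ℤ] ExteriorAlgebra ℤ (E → ℤ) := ExteriorAlgebra.ιMulti ℤ k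
    with hf
  set F : (Fin k → E) → ExteriorAlgebra ℤ (E → ℤ) :=
    fun r => (∏ i, γ i (r i)) • f (u ∘ r) with hF
  -- Step 1: expand into a sum over all functions `Fin k → E`.
  have hγi : ∀ i, γ i = ∑ e, γ i e • u e := by
    intro i; funext x
    simp only [Finset.sum_apply, Pi.smul_apply, smul_eq_mul, hu, Pi.single_apply, mul_ite,
      mul_one, mul_zero]
    simp
  have E1 : f γ = ∑ r : Fin k → E, F r := by
    have h0 : f (fun i => ∑ e, γ i e • u e) = ∑ r : Fin k → E, f (fun i => γ i (r i) • u (r i)) :=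
      f.toMultilinearMap.map_sum (g := fun i e => γ i e • u e)
    have h1 : ∀ r : Fin k → E,
        f (fun i => γ i (r i) • u (r i)) = (∏ i, γ i (r i)) • f (u ∘ r) := fun r =>
      f.toMultilinearMap.map_smul_univ (fun i => γ i (r i)) (fun i => u (r i))
    calc f γ = f (fun i => ∑ e, γ i e • u e) := by
          congr 1; funext i; exact hγi i
      _ = ∑ r : Fin k → E, f (fun i => γ i (r i) • u (r i)) := h0
      _ = ∑ r : Fin k → E, F r := by
          refine Finset.sum_congr rfl fun r _ => ?_
          rw [h1 r]
  -- Step 2: only injective functions contribute.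
  set Inj : Finset (Fin k → E) := Finset.univ.filter Function.Injective with hInj
  have E2 : ∑ r : Fin k → E, F r = ∑ r ∈ Inj, F r := by
    rw [← Finset.sum_filter_add_sum_filter_not Finset.univ Function.Injective F]
    have : ∑ r ∈ Finset.univ.filter (¬ Function.Injective ·), F r = 0 := by
      refine Finset.sum_eq_zero fun r hr => ?_
      have hni : ¬ Function.Injective r := (Finset.mem_filter.mp hr).2
      rw [Function.not_injective_iff] at hni
      obtain ⟨i, j, hij, hne⟩ := hni
      have : f (u ∘ r) = 0 :=
        AlternatingMap.map_eq_zero_of_eq f _ (show (u ∘ r) i = (u ∘ r) j by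
          simp [Function.comp, hij]) hne
      rw [hF]; simp only [this, smul_zero]
    rw [this, add_zero]
  -- Step 3: group injective functions by their range.
  set Fil : Finset (Finset E) := Finset.univ.filter (fun S => S.card = k) with hFil
  have hcardmem : ∀ S ∈ Fil, S.card = k := fun S hS => (Finset.mem_filter.mp hS).2
  set s : Finset ({x // x ∈ Fil} × Equiv.Perm (Fin k)) := Finset.univ with hs
  set emb : {x // x ∈ Fil} → (Fin k → E) :=
    fun S => (S.1.orderEmbOfFin (hcardmem S.1 S.2) : Fin k → E) with hemb
  have hembinj : ∀ S, Function.Injective (emb S) := by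
    intro S
    exact (S.1.orderEmbOfFin (hcardmem S.1 S.2)).injective
  have hembrange : ∀ S, Finset.univ.image (emb S) = S.1 := by
    intro S
    apply Finset.coe_injective
    rw [Finset.coe_image, Finset.coe_univ, Set.image_univ]
    exact Finset.range_orderEmbOfFin _ _
  have himage_comp : ∀ (S : {x // x ∈ Fil}) (σ : Equiv.Perm (Fin k)),
      Finset.univ.image (emb S ∘ σ) = S.1 := by
    intro S σ
    apply Finset.coe_injective
    rw [Finset.coe_image, Finset.coe_univ, Set.image_univ, Function.Surjective.range_comp
      σ.surjective (emb S)]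
    exact Finset.range_orderEmbOfFin _ _
  have E3 : ∑ p ∈ s, F (emb p.1 ∘ p.2) = ∑ r ∈ Inj, F r := by
    refine Finset.sum_bij (fun p _ => emb p.1 ∘ p.2) ?_ ?_ ?_ (fun _ _ => rfl)
    · intro p _
      rw [hInj, Finset.mem_filter]
      exact ⟨Finset.mem_univ _, (hembinj p.1).comp p.2.injective⟩
    · rintro ⟨pS, pσ⟩ hp ⟨qS, qσ⟩ hq hpq
      have hpq' : emb pS ∘ ⇑pσ = emb qS ∘ ⇑qσ := hpq
      have hS : pS = qS := by
        apply Subtype.ext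
        rw [← himage_comp pS pσ, ← himage_comp qS qσ, hpq']
      subst hS
      have hσ : pσ = qσ := by
        apply Equiv.ext
        intro i
        exact hembinj pS (congrFun hpq' i)
      rw [hσ]
    · intro r hr
      have hrinj : Function.Injective r := (Finset.mem_filter.mp hr).2
      have hrcard : (Finset.univ.image r).card = k := by
        rw [Finset.card_image_of_injective _ hrinj, Finset.card_univ, Fintype.card_fin]
      have hrFil : Finset.univ.image r ∈ Fil := by
        rw [hFil, Finset.mem_filter]; exact ⟨Finset.mem_univ _, hrcard⟩
      set S : {x // x ∈ Fil} := ⟨Finset.univ.image r, hrFil⟩ with hS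
      have hmem : ∀ i, r i ∈ S.1 := fun i => Finset.mem_image_of_mem r (Finset.mem_univ i)
      set g : Fin k → Fin k :=
        fun i => (S.1.orderIsoOfFin (hcardmem S.1 S.2)).symm ⟨r i, hmem i⟩ with hg
      have h2 : ∀ x, ((S.1.orderIsoOfFin (hcardmem S.1 S.2)) (g x) : E) = r x := by
        intro x
        rw [hg]
        simp only [OrderIso.apply_symm_apply]
      have hginj : Function.Injective g := by
        intro a b hab
        apply hrinj
        rw [← h2 a, ← h2 b, hab]
      have hgbij : Function.Bijective g := Finite.injective_iff_bijective.mp hginj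
      refine ⟨(S, Equiv.ofBijective g hgbij), Finset.mem_univ _, ?_⟩
      funext i
      show emb S (g i) = r i
      have h3 := h2 i
      rwa [Finset.coe_orderIsoOfFin_apply] at h3
  -- Step 4 : sum over each range separately.
  have E4 : ∑ p ∈ s, F (emb p.1 ∘ p.2)
      = ∑ S : {x // x ∈ Fil}, detOn γ S.1 • eWedge S.1 := by
    rw [hs, ← Finset.univ_product_univ, Finset.sum_product]
    refine Finset.sum_congr rfl fun S _ => ?_
    have hperm := perm_sum_smul (M := E → ℤ) (N := ExteriorAlgebra ℤ (E → ℤ))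
      (Matrix.of fun i j => γ i (emb S j)) f (u ∘ emb S)
    calc ∑ σ : Equiv.Perm (Fin k), F (emb S ∘ σ)
        = ∑ σ : Equiv.Perm (Fin k),
            (∏ i, (Matrix.of fun i j => γ i (emb S j)) i (σ i)) • f ((u ∘ emb S) ∘ σ) := rfl
      _ = (Matrix.of fun i j => γ i (emb S j)).det • f (u ∘ emb S) := hperm
      _ = detOn γ S.1 • eWedge S.1 := by
          rw [detOn, dif_pos (hcardmem S.1 S.2), eWedge_eq S.1 (hcardmem S.1 S.2)]
          rfl
  -- Step 5: back to a sum over all finsets.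
  have E5 : ∑ S : {x // x ∈ Fil}, detOn γ S.1 • eWedge S.1
      = ∑ S : Finset E, detOn γ S • eWedge S := by
    rw [Finset.sum_coe_sort Fil (fun S => detOn γ S • eWedge S)]
    refine Finset.sum_subset (Finset.subset_univ Fil) ?_
    intro S _ hS
    have hcard : S.card ≠ k := by
      intro h
      exact hS (by rw [hFil, Finset.mem_filter]; exact ⟨Finset.mem_univ _, h⟩)
    rw [detOn, dif_neg hcard, zero_smul]
  rw [show ExteriorAlgebra.ιMulti ℤ k γ = f γ from rfl, E1, E2, ← E3, E4, E5]

omit [Fintype V] [DecidableEq V] [Fintype E] [DecidableEq E] in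
lemma sum_orderEmb {S : Finset E} {k : ℕ} (hS : S.card = k) {M : Type*} [AddCommMonoid M]
    (h : E → M) : ∑ j : Fin k, h (S.orderEmbOfFin hS j) = ∑ e ∈ S, h e := by
  rw [← Finset.sum_coe_sort S h]
  exact Fintype.sum_equiv (S.orderIsoOfFin hS).toEquiv _ _
    (fun j => by rw [RelIso.coe_fn_toEquiv, ← Finset.coe_orderIsoOfFin_apply])

/-- If the complement of `S` does not connect the graph, the determinant of `γ` on the
columns `S` vanishes. -/
lemma detOn_eq_zero (hconn : ∀ v w : V, Conn head tail (Finset.univ : Finset E) v w)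
    {k : ℕ} (γ : Fin k → (E → ℤ)) (hγ : ∀ i, bd head tail (γ i) = 0)
    (S : Finset E) (hS : S.card = k)
    (hnot : ¬ ∀ v w : V, Conn head tail Sᶜ v w) : detOn γ S = 0 := by
  push_neg at hnot
  obtain ⟨v, w, hvw⟩ := hnot
  classical
  set C : Finset V := Finset.univ.filter (fun u => Conn head tail Sᶜ v u) with hC
  have hmemC : ∀ u, u ∈ C ↔ Conn head tail Sᶜ v u := by intro u; simp [hC]
  set ε : E → ℤ := fun e => (if head e ∈ C then (1:ℤ) else 0) - (if tail e ∈ C then 1 else 0)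
    with hε
  have hclosed : ∀ e ∈ Sᶜ, ε e = 0 := by
    intro e he
    have hiff : head e ∈ C ↔ tail e ∈ C := by
      rw [hmemC, hmemC]
      constructor
      · intro h; exact conn_trans head tail h (conn_step head tail he)
      · intro h; exact conn_trans head tail h (conn_symm head tail (conn_step head tail he))
    by_cases hh : head e ∈ C
    · rw [hε]; simp only [if_pos hh, if_pos (hiff.mp hh)]; ring
    · rw [hε]; simp only [if_neg hh, if_neg (fun h => hh (hiff.mpr h))]; ring
  obtain ⟨estar, _, hcross⟩ := exists_crossing head tail (hconn v w)
    ((hmemC v).mpr (conn_refl head tail Sᶜ v)) (fun h => hvw ((hmemC w).mp h))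
  have hcrossne : ε estar ≠ 0 := by
    rw [hε]
    by_cases hh : head estar ∈ C
    · have : tail estar ∉ C := fun ht => hcross ⟨fun _ => ht, fun _ => hh⟩
      simp [hh, this]
    · have : tail estar ∈ C := by
        by_contra ht
        exact hcross ⟨fun h => absurd h hh, fun h => absurd h ht⟩
      simp [hh, this]
  have heS : estar ∈ S := by
    by_contra h
    exact hcrossne (hclosed estar (Finset.mem_compl.mpr h))
  set d : Fin k → ℤ := fun j => ε (S.orderEmbOfFin hS j) with hd
  have hd0 : d ≠ 0 := by
    intro h0
    have := congrFun h0 ((S.orderIsoOfFin hS).symm ⟨estar, heS⟩)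
    rw [hd] at this
    simp only at this
    rw [show S.orderEmbOfFin hS ((S.orderIsoOfFin hS).symm ⟨estar, heS⟩) = estar by
      rw [← Finset.coe_orderIsoOfFin_apply, OrderIso.apply_symm_apply]] at this
    exact hcrossne this
  have hMd : (Matrix.of fun i j => γ i (S.orderEmbOfFin hS j)).mulVec d = 0 := by
    funext i
    show ∑ j, γ i (S.orderEmbOfFin hS j) * d j = 0
    have h1 : ∑ j, γ i (S.orderEmbOfFin hS j) * d j
        = ∑ e ∈ S, γ i e * ε e := by
      rw [hd]
      exact sum_orderEmb hS (fun e => γ i e * ε e)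
    rw [h1]
    have h2 : ∑ e ∈ S, γ i e * ε e = ∑ e, γ i e * ε e := by
      refine Finset.sum_subset (Finset.subset_univ S) ?_
      intro e _ he
      rw [hclosed e (Finset.mem_compl.mpr he), mul_zero]
    rw [h2, hε]
    exact cycle_cut head tail C (hγ i)
  have hdet : (Matrix.of fun i j => γ i (S.orderEmbOfFin hS j)).det = 0 :=
    Matrix.exists_mulVec_eq_zero_iff.mp ⟨d, hd0, hMd⟩
  rw [detOn, dif_pos hS]
  exact hdet

/-- Every cycle is the sum of fundamental cycles of a spanning tree. -/
lemma cycle_eq_sum_fund (T : Finset E) (hT : IsSpanningTree head tail T)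
    (g : Finset E → E → (E → ℤ))
    (hg : ∀ T f, IsSpanningTree head tail T → f ∉ T →
      bd head tail (g T f) = 0 ∧ g T f f = 1 ∧
      ∀ e, e ∉ T → e ≠ f → g T f e = 0)
    (z : E → ℤ) (hz : bd head tail z = 0) :
    z = ∑ f ∈ Tᶜ, z f • g T f := by
  have hmem : ∀ f ∈ Tᶜ, f ∉ T := fun f hf => Finset.mem_compl.mp hf
  set z' : E → ℤ := z - ∑ f ∈ Tᶜ, z f • g T f with hz'
  have hbd : bd head tail z' = 0 := by
    rw [hz', map_sub, hz, map_sum]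
    simp only [map_smul]
    rw [Finset.sum_congr rfl (fun f hf => by
      rw [(hg T f hT (hmem f hf)).1, smul_zero])]
    simp
  have hsupp : ∀ e ∉ T, z' e = 0 := by
    intro e he
    have heC : e ∈ Tᶜ := Finset.mem_compl.mpr he
    rw [hz']
    simp only [Pi.sub_apply, Finset.sum_apply, Pi.smul_apply, smul_eq_mul]
    rw [Finset.sum_eq_single_of_mem e heC (fun f hf hne => by
      rw [(hg T f hT (hmem f hf)).2.2 e he (fun h => hne h.symm), mul_zero])]
    rw [(hg T e hT he).2.1, mul_one, sub_self]
  have := tree_cycle_zero head tail T hT hbd hsupp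
  rw [hz'] at this
  exact (sub_eq_zero.mp this)

open TensorProduct in
theorem tensor_square_cycle_tree_identity'
    (hconn : ∀ v w : V, Conn head tail (Finset.univ : Finset E) v w)
    (k : ℕ) (hk : k + Fintype.card V = Fintype.card E + 1)
    (γ : Fin k → (E → ℤ))
    (hγ_indep : LinearIndependent ℤ γ)
    (hγ_span : Submodule.span ℤ (Set.range γ) = LinearMap.ker (bd head tail))
    (g : Finset E → E → (E → ℤ))
    (hg : ∀ T f, IsSpanningTree head tail T → f ∉ T →
      bd head tail (g T f) = 0 ∧ g T f f = 1 ∧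
      ∀ e, e ∉ T → e ≠ f → g T f e = 0) :
    (∑ T : Finset E,
        if IsSpanningTree head tail T then
          (listWedge (((Tᶜ : Finset E).sort (· ≤ ·)).map (g T))) ⊗ₜ[ℤ]
            (eWedge (Tᶜ : Finset E))
        else 0) =
      (chainWedge γ) ⊗ₜ[ℤ] (chainWedge γ) := by
  classical
  rcases isEmpty_or_nonempty V with hV | hV
  · haveI : IsEmpty E := ⟨fun e => IsEmpty.false (head e)⟩
    have h1 : Fintype.card V = 0 := Fintype.card_eq_zero
    have h2 : Fintype.card E = 0 := Fintype.card_eq_zero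
    have hk1 : k = 1 := by omega
    exfalso
    have h0 : γ ⟨0, by omega⟩ = 0 := funext fun e => (IsEmpty.false e).elim
    exact hγ_indep.ne_zero ⟨0, by omega⟩ h0
  have hVpos : 1 ≤ Fintype.card V := Fintype.card_pos
  have hker : ∀ i, bd head tail (γ i) = 0 := fun i =>
    LinearMap.mem_ker.mp (hγ_span ▸ Submodule.subset_span (Set.mem_range_self i))
  have hterm : ∀ T : Finset E,
      (if IsSpanningTree head tail T then
          (listWedge (((Tᶜ : Finset E).sort (· ≤ ·)).map (g T))) ⊗ₜ[ℤ]
            (eWedge (Tᶜ : Finset E))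
        else 0)
      = (chainWedge γ) ⊗ₜ[ℤ]
          ((if IsSpanningTree head tail T then detOn γ (Tᶜ : Finset E) else 0) •
            eWedge (Tᶜ : Finset E)) := by
    intro T
    by_cases hT : IsSpanningTree head tail T
    swap
    · rw [if_neg hT, if_neg hT, zero_smul, TensorProduct.tmul_zero]
    rw [if_pos hT, if_pos hT]
    have hTc : (Tᶜ : Finset E).card = k := by
      have h1 := hT.1
      have h2 : (Tᶜ : Finset E).card = Fintype.card E - T.card := Finset.card_compl T
      have h3 : T.card ≤ Fintype.card E := Finset.card_le_univ T
      omega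
    set emb : Fin k → E := fun j => (Tᶜ : Finset E).orderEmbOfFin hTc j with hembdef
    have hembmem : ∀ j, emb j ∉ T := fun j =>
      Finset.mem_compl.mp (Finset.orderEmbOfFin_mem _ hTc j)
    set w : Fin k → (E → ℤ) := fun j => g T (emb j) with hw
    set A : Matrix (Fin k) (Fin k) ℤ := Matrix.of fun i j => γ i (emb j) with hA
    have hexp : ∀ i, γ i = ∑ j, A i j • w j := by
      intro i
      have h1 := cycle_eq_sum_fund head tail T hT g hg (γ i) (hker i)
      nth_rewrite 1 [h1]
      rw [← sum_orderEmb hTc (fun f => γ i f • g T f)]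
      rfl
    have hwker : ∀ j, w j ∈ Submodule.span ℤ (Set.range γ) := by
      intro j
      rw [hγ_span]
      exact LinearMap.mem_ker.mpr (hg T (emb j) hT (hembmem j)).1
    have hBex : ∀ j, ∃ c : Fin k → ℤ, ∑ l, c l • γ l = w j := fun j =>
      (Submodule.mem_span_range_iff_exists_fun ℤ).mp (hwker j)
    choose B hB using hBex
    set Bm : Matrix (Fin k) (Fin k) ℤ := Matrix.of fun j l => B j l with hBm
    have hAB : A * Bm = 1 := by
      ext i l
      rw [Matrix.mul_apply, Matrix.one_apply]
      have hz : ∑ l', ((∑ j, A i j * Bm j l') - (if i = l' then (1:ℤ) else 0)) • γ l' = 0 := by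
        have e1 : ∑ l', (∑ j, A i j * Bm j l') • γ l' = γ i := by
          calc ∑ l', (∑ j, A i j * Bm j l') • γ l'
              = ∑ l', ∑ j, (A i j * Bm j l') • γ l' := by
                refine Finset.sum_congr rfl fun l' _ => ?_
                rw [Finset.sum_smul]
            _ = ∑ j, ∑ l', (A i j * Bm j l') • γ l' := Finset.sum_comm
            _ = ∑ j, A i j • w j := by
                refine Finset.sum_congr rfl fun j _ => ?_
                rw [← hB j, Finset.smul_sum]
                refine Finset.sum_congr rfl fun l' _ => ?_
                rw [smul_smul]
                rfl
            _ = γ i := (hexp i).symm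
        have e2 : ∑ l', (if i = l' then (1:ℤ) else 0) • γ l' = γ i := by
          simp [ite_smul]
        simp only [sub_smul]
        rw [Finset.sum_sub_distrib, e1, e2, sub_self]
      have := Fintype.linearIndependent_iff.mp hγ_indep _ hz l
      exact sub_eq_zero.mp this
    have hdet1 : A.det * Bm.det = 1 := by rw [← Matrix.det_mul, hAB, Matrix.det_one]
    have hdeteq : Bm.det = A.det := by
      rcases Int.mul_eq_one_iff_eq_one_or_neg_one.mp hdet1 with ⟨h1, h2⟩ | ⟨h1, h2⟩ <;>
        rw [h1, h2]
    have hwedge : listWedge (((Tᶜ : Finset E).sort (· ≤ ·)).map (g T))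
        = Bm.det • chainWedge γ := by
      rw [listWedge_sort_map (Tᶜ : Finset E) hTc (g T), chainWedge_eq]
      have hfun : (fun j => g T ((Tᶜ : Finset E).orderEmbOfFin hTc j))
          = fun j => ∑ l, Bm j l • γ l := by
        funext j
        rw [show (Bm j : Fin k → ℤ) = B j from rfl]
        rw [hB j]
      rw [hfun]
      exact alt_map_sum_smul (ExteriorAlgebra.ιMulti ℤ k) Bm γ
    rw [hwedge, TensorProduct.smul_tmul, hdeteq, detOn, dif_pos hTc]
  rw [Finset.sum_congr rfl (fun T _ => hterm T), ← TensorProduct.tmul_sum]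
  congr 1
  have hre : ∑ T : Finset E,
      (if IsSpanningTree head tail T then detOn γ (Tᶜ : Finset E) else 0) •
        eWedge (Tᶜ : Finset E)
      = ∑ S : Finset E,
        (if IsSpanningTree head tail (Sᶜ : Finset E) then detOn γ S else 0) • eWedge S := by
    refine Fintype.sum_bijective compl (Function.Involutive.bijective compl_compl) _ _ ?_
    intro T
    simp only [compl_compl]
  rw [hre]
  have hfix : ∀ S : Finset E,
      (if IsSpanningTree head tail (Sᶜ : Finset E) then detOn γ S else 0) • eWedge S
      = detOn γ S • eWedge S := by
    intro S
    by_cases hsp : IsSpanningTree head tail (Sᶜ : Finset E)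
    · rw [if_pos hsp]
    · rw [if_neg hsp]
      by_cases hSk : S.card = k
      · have hnotconn : ¬ ∀ v w : V, Conn head tail (Sᶜ : Finset E) v w := by
          intro hc
          apply hsp
          refine ⟨?_, hc⟩
          have h2 : (Sᶜ : Finset E).card = Fintype.card E - S.card := Finset.card_compl S
          have h3 : S.card ≤ Fintype.card E := Finset.card_le_univ S
          omega
        rw [detOn_eq_zero head tail hconn γ hker S hSk hnotconn, zero_smul]
      · rw [detOn, dif_neg hSk, zero_smul]
  rw [Finset.sum_congr rfl (fun S _ => hfix S), ← iMulti_expand γ, ← chainWedge_eq]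

end ConnLemmas

open Classical TensorProduct

/-- **The tensor-square cycle–tree identity.**
Let `K` be a finite connected graph with first Betti number `k`, `(γ₁,…,γ_k)` an
integral basis of `Z₁(K,ℤ)`, and for each spanning tree `T` and edge `f ∉ T` let
`γ(T,f)` be the fundamental cycle (the unique cycle supported in `T ∪ {f}` with
coefficient `1` on `f`).  Then
`Σ_{T spanning tree} (γ(T,e₁) ∧ … ∧ γ(T,e_k)) ⊗ (e₁ ∧ … ∧ e_k) = (γ₁∧…∧γ_k)^{⊗2}`,
where `e₁ < … < e_k` are the edges of `K` not in `T`. -/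
theorem tensor_square_cycle_tree_identity
    {V E : Type*} [Fintype V] [Fintype E] [DecidableEq V] [DecidableEq E]
    [LinearOrder E] (head tail : E → V)
    (hconn : ∀ v w : V, Conn head tail (Finset.univ : Finset E) v w)
    (k : ℕ) (hk : k + Fintype.card V = Fintype.card E + 1)
    (γ : Fin k → (E → ℤ))
    (hγ_indep : LinearIndependent ℤ γ)
    (hγ_span : Submodule.span ℤ (Set.range γ) = LinearMap.ker (bd head tail))
    (g : Finset E → E → (E → ℤ))
    (hg : ∀ T f, IsSpanningTree head tail T → f ∉ T →
      bd head tail (g T f) = 0 ∧ g T f f = 1 ∧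
      ∀ e, e ∉ T → e ≠ f → g T f e = 0) :
    (∑ T : Finset E,
        if IsSpanningTree head tail T then
          (listWedge (((Tᶜ : Finset E).sort (· ≤ ·)).map (g T))) ⊗ₜ[ℤ]
            (eWedge (Tᶜ : Finset E))
        else 0) =
      (chainWedge γ) ⊗ₜ[ℤ] (chainWedge γ) := by
  exact tensor_square_cycle_tree_identity' head tail hconn k hk γ hγ_indep hγ_span g hg
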